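/- (Proposition 4.2, part 2.) Let I be an ideal of ℝ[x] = MvPolynomial (Fin n) ℝ and let h₁,…,h_m ∈ ℝ[x] be I-spherical polynomials whose residue classes generate ℝ[x]/I as an ℝ-algebra. Define Φ : ℝⁿ → ℝᵐ by Φ(x) = (eval x h₁, …, eval x h_m), and let J be the ideal of MvPolynomial (Fin m) ℝ consisting of all f such that the substitution f(h₁,…,h_m) (i.e., MvPolynomial.aeval h applied to f) lies in I. Then the image of V_ℝ(I) under Φ equals the real variety V_ℝ(J) ⊆ ℝᵐ; in particular, Φ(V_ℝ(I)) is a real algebraic subvariety of the unit sphere in ℝᵐ. -/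

import Mathlib

open MvPolynomial

/-- Proposition 4.2, part 2: the image of `V_ℝ(I)` under `Φ = (h₁,…,h_m)` equals the
real variety of `J = (aeval h)⁻¹(I)`, a real algebraic subvariety of the unit sphere of
`ℝᵐ`. -/
theorem spherical_map_image_eq_variety {n m : ℕ}
    (I : Ideal (MvPolynomial (Fin n) ℝ))
    (h : Fin m → MvPolynomial (Fin n) ℝ)
    (hsph : (∑ i, h i ^ 2) - 1 ∈ I)
    (hgen : Algebra.adjoin ℝ (Set.range fun i => Ideal.Quotient.mk I (h i)) = ⊤) :
    ((fun x : Fin n → ℝ => fun i => eval x (h i)) ''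
        {x : Fin n → ℝ | ∀ g ∈ I, eval x g = 0} =
      {y : Fin m → ℝ |
        ∀ f ∈ Ideal.comap
          (MvPolynomial.aeval h : MvPolynomial (Fin m) ℝ →ₐ[ℝ] MvPolynomial (Fin n) ℝ) I,
          eval y f = 0}) ∧
    ∀ y ∈ (fun x : Fin n → ℝ => fun i => eval x (h i)) ''
        {x : Fin n → ℝ | ∀ g ∈ I, eval x g = 0},
      ∑ i, y i ^ 2 = 1 := by
  have key : ∀ (x : Fin n → ℝ) (f : MvPolynomial (Fin m) ℝ),
      eval x (aeval h f) = eval (fun i => eval x (h i)) f := by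
    intro x f
    rw [show (aeval h : MvPolynomial (Fin m) ℝ →ₐ[ℝ] MvPolynomial (Fin n) ℝ) f
      = bind₁ h f from rfl]
    show eval₂Hom (RingHom.id ℝ) x (bind₁ h f) = eval₂Hom (RingHom.id ℝ) _ f
    rw [eval₂Hom_bind₁]
    rfl
  constructor
  · ext y
    constructor
    · rintro ⟨x, hx, rfl⟩ f hf
      rw [← key]
      exact hx _ hf
    · intro hy
      set ψ : MvPolynomial (Fin m) ℝ →ₐ[ℝ] MvPolynomial (Fin n) ℝ ⧸ I :=
        (Ideal.Quotient.mkₐ ℝ I).comp (aeval h) with hψdef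
      have hψ : Function.Surjective ψ := by
        rw [← AlgHom.range_eq_top, ← top_le_iff, ← hgen, Algebra.adjoin_le_iff]
        rintro _ ⟨i, rfl⟩
        exact ⟨X i, by simp [hψdef]⟩
      have hkerle : ∀ f ∈ RingHom.ker ψ, (aeval y : MvPolynomial (Fin m) ℝ →ₐ[ℝ] ℝ) f = 0 := by
        intro f hf
        have hfI : aeval h f ∈ I := by
          rw [RingHom.mem_ker, hψdef, AlgHom.comp_apply, Ideal.Quotient.mkₐ_eq_mk,
            Ideal.Quotient.eq_zero_iff_mem] at hf
          exact hf
        have := hy f hfI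
        rwa [show (aeval y : MvPolynomial (Fin m) ℝ →ₐ[ℝ] ℝ) f = eval y f by
          rw [← coe_aeval_eq_eval]; rfl]
      let e := Ideal.quotientKerAlgEquivOfSurjective hψ
      let φ : (MvPolynomial (Fin n) ℝ ⧸ I) →ₐ[ℝ] ℝ :=
        (Ideal.Quotient.liftₐ (RingHom.ker ψ) (aeval y) hkerle).comp e.symm.toAlgHom
      have hφψ : ∀ f, φ (ψ f) = eval y f := by
        intro f
        have he : e (Ideal.Quotient.mk (RingHom.ker ψ) f) = ψ f := by
          simp only [e, Ideal.quotientKerAlgEquivOfSurjective,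
            Ideal.quotientKerAlgEquivOfRightInverse_apply]
          exact RingHom.kerLift_mk (f := (ψ : MvPolynomial (Fin m) ℝ →+* MvPolynomial (Fin n) ℝ ⧸ I)) f
        have : e.symm (ψ f) = Ideal.Quotient.mk (RingHom.ker ψ) f := by
          rw [← he, AlgEquiv.symm_apply_apply]
        simp only [φ, AlgHom.comp_apply, AlgEquiv.toAlgHom_eq_coe, AlgHom.coe_coe, this,
          Ideal.Quotient.liftₐ_apply, Ideal.Quotient.lift_mk]
        erw [this]
        rfl
      set x : Fin n → ℝ := fun j => φ (Ideal.Quotient.mk I (X j)) with hxdef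
      have hevalx : ∀ g, eval x g = φ (Ideal.Quotient.mk I g) := by
        intro g
        have := MvPolynomial.aeval_unique (φ.comp (Ideal.Quotient.mkₐ ℝ I))
        have hg := congrArg (fun ξ : MvPolynomial (Fin n) ℝ →ₐ[ℝ] ℝ => ξ g) this
        simp only [AlgHom.comp_apply, Ideal.Quotient.mkₐ_eq_mk] at hg
        rw [hg, show ((φ.comp (Ideal.Quotient.mkₐ ℝ I)) ∘ X) = x from rfl,
          show (aeval x : MvPolynomial (Fin n) ℝ →ₐ[ℝ] ℝ) g = eval x g by
            rw [← coe_aeval_eq_eval]; rfl]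
      refine ⟨x, ?_, ?_⟩
      · intro g hg
        rw [hevalx, Ideal.Quotient.eq_zero_iff_mem.mpr hg, map_zero]
      · funext i
        have : eval x (h i) = φ (ψ (X i)) := by
          rw [hevalx]; simp [hψdef]
        simp only at this ⊢
        rw [this, hφψ, eval_X]
  · rintro y ⟨x, hx, rfl⟩
    have h0 := hx _ hsph
    simp only [map_sub, map_sum, map_pow, map_one] at h0
    linarith
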